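/- Consider the proximal-type algorithm on problem min_{x∈X} f(x) s.t. c(x) ≤ 0, with improvement function H(y;x) = max{f(y) − f(x) − ρ[c(x)]₊, c(y)}, ρ ∈ [0,1], and parameters κ ∈ (0,1), λ ∈ [0,κ). Suppose the sequence of serious iterates {xᵏ} ⊆ X satisfies, for all k ≥ k₁, xᵏ⁺¹ ∈ X and H(xᵏ⁺¹; xᵏ) ≤ H(xᵏ; xᵏ) − ((κ−λ)/2)‖xᵏ⁺¹ − xᵏ‖², and that c(x^{k₁}) ≤ 0. If f is continuous and {xᵏ} is bounded, then c(xᵏ) ≤ 0 for all k ≥ k₁, f(xᵏ⁺¹) ≤ f(xᵏ) − ((κ−λ)/2)‖xᵏ⁺¹ − xᵏ‖² for all k ≥ k₁, Σ_{k≥k₁} ‖xᵏ⁺¹ − xᵏ‖² < ∞, and ‖xᵏ⁺¹ − xᵏ‖ → 0. -/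
import Mathlib


open Filter

/-- Serious-step descent analysis: if the iterates satisfy the descent test of the
improvement function and start feasible, then they stay feasible, `f` decreases with
a quadratic margin, the squared step lengths are summable, and the step lengths vanish. -/
theorem stmt_13 {n : ℕ} (X : Set (EuclideanSpace ℝ (Fin n)))
    (f c : EuclideanSpace ℝ (Fin n) → ℝ) (hf : Continuous f) (hc : Continuous c)
    (ρ : ℝ) (hρ0 : 0 ≤ ρ) (hρ1 : ρ ≤ 1)
    (κ lam : ℝ) (hκ0 : 0 < κ) (hκ1 : κ < 1) (hlam0 : 0 ≤ lam) (hlam : lam < κ)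
    (x : ℕ → EuclideanSpace ℝ (Fin n)) (hxX : ∀ k, x k ∈ X)
    (hbdd : Bornology.IsBounded (Set.range x))
    (k₁ : ℕ) (hfeas : c (x k₁) ≤ 0)
    (hdesc : ∀ k ≥ k₁,
      max (f (x (k + 1)) - (f (x k) + ρ * max (c (x k)) 0)) (c (x (k + 1)))
        ≤ max (f (x k) - (f (x k) + ρ * max (c (x k)) 0)) (c (x k))
          - (κ - lam) / 2 * ‖x (k + 1) - x k‖ ^ 2) :
    (∀ k ≥ k₁, c (x k) ≤ 0) ∧
    (∀ k ≥ k₁, f (x (k + 1)) ≤ f (x k) - (κ - lam) / 2 * ‖x (k + 1) - x k‖ ^ 2) ∧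
    Summable (fun k => ‖x (k + 1) - x k‖ ^ 2) ∧
    Tendsto (fun k => ‖x (k + 1) - x k‖) atTop (nhds 0) := by

  have hμ : 0 < (κ - lam) / 2 := by linarith
  have hfeas' : ∀ k ≥ k₁, c (x k) ≤ 0 := by
    intro k hk
    induction k, hk using Nat.le_induction with
    | base => exact hfeas
    | succ k hk ih =>
      have h := hdesc k hk
      rw [max_eq_right ih] at h
      have hrhs : max (f (x k) - (f (x k) + ρ * 0)) (c (x k)) = 0 := by
        rw [mul_zero, add_zero, sub_self]
        exact max_eq_left ih
      rw [hrhs] at h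
      have hs : 0 ≤ ‖x (k + 1) - x k‖ ^ 2 := by positivity
      have h2 := le_trans (le_max_right (f (x (k + 1)) - (f (x k) + ρ * 0)) (c (x (k + 1)))) h
      nlinarith
  have hfdec : ∀ k ≥ k₁, f (x (k + 1)) ≤ f (x k) - (κ - lam) / 2 * ‖x (k + 1) - x k‖ ^ 2 := by
    intro k hk
    have h := hdesc k hk
    have ih := hfeas' k hk
    rw [max_eq_right ih] at h
    have hrhs : max (f (x k) - (f (x k) + ρ * 0)) (c (x k)) = 0 := by
      rw [mul_zero, add_zero, sub_self]
      exact max_eq_left ih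
    rw [hrhs] at h
    have h2 := le_trans (le_max_left (f (x (k + 1)) - (f (x k) + ρ * 0)) (c (x (k + 1)))) h
    linarith
  -- lower bound on f over the iterates
  have hK : IsCompact (closure (Set.range x)) := hbdd.isCompact_closure
  obtain ⟨B, hB⟩ := (hK.image hf).bddBelow
  have hBle : ∀ k, B ≤ f (x k) := fun k =>
    hB ⟨x k, subset_closure ⟨k, rfl⟩, rfl⟩
  -- partial sums bounded
  have hps : ∀ N, (κ - lam) / 2 * ∑ i ∈ Finset.range N, ‖x (i + k₁ + 1) - x (i + k₁)‖ ^ 2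
      ≤ f (x k₁) - f (x (N + k₁)) := by
    intro N
    induction N with
    | zero => simp
    | succ N ih =>
      have hd := hfdec (N + k₁) (Nat.le_add_left _ _)
      rw [Finset.sum_range_succ, mul_add]
      have : N + 1 + k₁ = N + k₁ + 1 := by omega
      rw [this]
      linarith
  have hsum' : Summable (fun i => ‖x (i + k₁ + 1) - x (i + k₁)‖ ^ 2) := by
    apply summable_of_sum_range_le (c := (f (x k₁) - B) / ((κ - lam) / 2))
    · intro i; positivity
    · intro N
      rw [le_div_iff₀ hμ]
      have := hps N
      have := hBle (N + k₁)
      nlinarith [hps N]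
  have hsum : Summable (fun k => ‖x (k + 1) - x k‖ ^ 2) := by
    have := (summable_nat_add_iff (f := fun k => ‖x (k + 1) - x k‖ ^ 2) k₁).mp ?_
    · exact this
    · exact hsum'
  refine ⟨hfeas', hfdec, hsum, ?_⟩
  have hg0 : Tendsto (fun k => ‖x (k + 1) - x k‖ ^ 2) atTop (nhds 0) :=
    hsum.tendsto_atTop_zero
  have := (Real.continuous_sqrt.tendsto 0).comp hg0
  simpa [Function.comp_def, Real.sqrt_sq (norm_nonneg _)] using this
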